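/- Let p, p' be probability density functions on a measurable space H satisfying p(h) ≤ e^ε · p'(h) for all h (ε ≥ 0), and let ℓ : H → ℝ be measurable with 0 ≤ ℓ(h) ≤ L for all h. Then |∫ ℓ(h) p(h) dh − ∫ ℓ(h) p'(h) dh| ≤ L(1 − e^{−ε}). -/

import Mathlib

open MeasureTheory Real

/-- Privacy implies stability: if densities `p, p'` satisfy `p ≤ e^ε p'` pointwise
and the loss `ℓ` takes values in `[0, L]`, then the two expected losses differ by
at most `L (1 - e^{-ε})`. -/
theorem privacy_implies_stability
    {H : Type*} [MeasurableSpace H] (μ : Measure H)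
    (p p' ℓ : H → ℝ) (ε L : ℝ) (hε : 0 ≤ ε)
    (hp : ∀ h, 0 ≤ p h) (hp' : ∀ h, 0 ≤ p' h)
    (hpi : Integrable p μ) (hp'i : Integrable p' μ)
    (hp1 : ∫ h, p h ∂μ = 1) (hp'1 : ∫ h, p' h ∂μ = 1)
    (hdp : ∀ h, p h ≤ Real.exp ε * p' h)
    (hℓm : Measurable ℓ) (hℓ0 : ∀ h, 0 ≤ ℓ h) (hℓL : ∀ h, ℓ h ≤ L)
    (hint : Integrable (fun h => ℓ h * p h) μ)
    (hint' : Integrable (fun h => ℓ h * p' h) μ) :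
    |(∫ h, ℓ h * p h ∂μ) - ∫ h, ℓ h * p' h ∂μ| ≤ L * (1 - Real.exp (-ε)) := by
  have hL : 0 ≤ L := by
    rcases isEmpty_or_nonempty H with hE | hne
    · exfalso
      have : (∫ h, p h ∂μ) = 0 := by
        simp [Measure.eq_zero_of_isEmpty μ]
      rw [this] at hp1; norm_num at hp1
    · obtain ⟨h⟩ := hne
      exact le_trans (hℓ0 h) (hℓL h)
  set c := Real.exp (-ε) with hc
  have hc0 : 0 < c := Real.exp_pos _
  have hc1 : c ≤ 1 := by
    calc c = Real.exp (-ε) := hc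
      _ ≤ Real.exp 0 := Real.exp_le_exp.mpr (neg_nonpos.mpr hε)
      _ = 1 := Real.exp_zero
  have hcp : ∀ h, c * p h ≤ p' h := by
    intro h
    have hee : Real.exp (-ε) * Real.exp ε = 1 := by
      rw [← Real.exp_add]; simp
    calc c * p h ≤ c * (Real.exp ε * p' h) :=
          mul_le_mul_of_nonneg_left (hdp h) hc0.le
      _ = (Real.exp (-ε) * Real.exp ε) * p' h := by rw [hc]; ring
      _ = p' h := by rw [hee, one_mul]
  set A := ∫ h, ℓ h * p h ∂μ with hA
  set B := ∫ h, ℓ h * p' h ∂μ with hB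
  -- A ≤ L
  have hA_le : A ≤ L := by
    calc A ≤ ∫ h, L * p h ∂μ :=
          integral_mono hint (hpi.const_mul L)
            (fun h => mul_le_mul_of_nonneg_right (hℓL h) (hp h))
      _ = L := by rw [integral_const_mul, hp1, mul_one]
  -- c * A ≤ B
  have hcAB : c * A ≤ B := by
    rw [hA, ← integral_const_mul]
    refine integral_mono (hint.const_mul c) hint' (fun h => ?_)
    calc c * (ℓ h * p h) = ℓ h * (c * p h) := by ring
      _ ≤ ℓ h * p' h := mul_le_mul_of_nonneg_left (hcp h) (hℓ0 h)
  -- integrability of (L - ℓ)·p and (L - ℓ)·p'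
  have hg : Integrable (fun h => (L - ℓ h) * p h) μ := by
    have := (hpi.const_mul L).sub hint
    simpa [sub_mul, Pi.sub_def] using this
  have hg' : Integrable (fun h => (L - ℓ h) * p' h) μ := by
    have := (hp'i.const_mul L).sub hint'
    simpa [sub_mul, Pi.sub_def] using this
  have hgA : (∫ h, (L - ℓ h) * p h ∂μ) = L - A := by
    have : (fun h => (L - ℓ h) * p h) = fun h => L * p h - ℓ h * p h := by
      funext h; ring
    rw [this, integral_sub (hpi.const_mul L) hint, integral_const_mul, hp1, mul_one]
  have hgB : (∫ h, (L - ℓ h) * p' h ∂μ) = L - B := by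
    have : (fun h => (L - ℓ h) * p' h) = fun h => L * p' h - ℓ h * p' h := by
      funext h; ring
    rw [this, integral_sub (hp'i.const_mul L) hint', integral_const_mul, hp'1, mul_one]
  -- L - A ≤ L
  have hA0 : L - A ≤ L := by
    rw [← hgA]
    calc (∫ h, (L - ℓ h) * p h ∂μ) ≤ ∫ h, L * p h ∂μ := by
          refine integral_mono hg (hpi.const_mul L) (fun h => ?_)
          exact mul_le_mul_of_nonneg_right (by linarith [hℓ0 h]) (hp h)
      _ = L := by rw [integral_const_mul, hp1, mul_one]
  -- c * (L - A) ≤ L - B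
  have hcAB' : c * (L - A) ≤ L - B := by
    rw [← hgA, ← hgB, ← integral_const_mul]
    refine integral_mono (hg.const_mul c) hg' (fun h => ?_)
    calc c * ((L - ℓ h) * p h) = (L - ℓ h) * (c * p h) := by ring
      _ ≤ (L - ℓ h) * p' h :=
        mul_le_mul_of_nonneg_left (hcp h) (by linarith [hℓL h])
  rw [abs_sub_le_iff]
  constructor <;> nlinarith
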